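/- Let G be a graph with Edmonds–Gallai decomposition D(G), A(G), C(G). Then every maximum matching of G contains a near-perfect matching of each component of G[D(G)], a perfect matching of each component of G[C(G)], and matches every vertex of A(G) to a vertex in a distinct component of G[D(G)]. -/

import Mathlib

set_option linter.unusedSectionVars false
set_option linter.unusedVariables false
set_option maxHeartbeats 1000000

/-- `M` is a maximum matching of `G` (a matching covering the most vertices). -/
def IsMaxMatching {V : Type*} (G : SimpleGraph V) (M : G.Subgraph) : Prop :=
  M.IsMatching ∧ ∀ N : G.Subgraph, N.IsMatching → N.support.ncard ≤ M.support.ncard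

/-- `D(G)`: the set of vertices missed by at least one maximum matching of `G`. -/
def Dset {V : Type*} (G : SimpleGraph V) : Set V :=
  {v | ∃ M : G.Subgraph, IsMaxMatching G M ∧ v ∉ M.support}

/-- `A(G)`: vertices outside `D(G)` adjacent to a vertex of `D(G)`. -/
def Aset {V : Type*} (G : SimpleGraph V) : Set V :=
  {v | v ∉ Dset G ∧ ∃ u ∈ Dset G, G.Adj v u}

/-- `C(G)`: the remaining vertices. -/
def Cset {V : Type*} (G : SimpleGraph V) : Set V :=
  {v | v ∉ Dset G ∧ v ∉ Aset G}

namespace EG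
open SimpleGraph Set

variable {V : Type*} [Fintype V] {G : SimpleGraph V}

/-- matchings avoiding `F` of maximum size among such -/
def AvM (G : SimpleGraph V) (F : Set V) (X : G.Subgraph) : Prop :=
  X.IsMatching ∧ (∀ f ∈ F, f ∉ X.support) ∧
    ∀ Y : G.Subgraph, Y.IsMatching → (∀ f ∈ F, f ∉ Y.support) → Y.support.ncard ≤ X.support.ncard

lemma avm_empty_iff (X : G.Subgraph) : AvM G ∅ X ↔ IsMaxMatching G X := by
  constructor
  · rintro ⟨h1, _, h3⟩; exact ⟨h1, fun N hN => h3 N hN (by simp)⟩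
  · rintro ⟨h1, h3⟩; exact ⟨h1, by simp, fun N hN _ => h3 N hN⟩

lemma matching_eq {X : G.Subgraph} (hX : X.IsMatching) {u v w : V}
    (h1 : X.Adj u v) (h2 : X.Adj u w) : v = w :=
  (hX h1.fst_mem).unique h1 h2

lemma exists_partner {X : G.Subgraph} (hX : X.IsMatching) {v : V}
    (hv : v ∈ X.support) : ∃ w, X.Adj v w := X.mem_support.mp hv

/-- builder for subgraphs from a symmetric relation -/
def mkM (G : SimpleGraph V) (R : V → V → Prop) (hs : ∀ {v w}, R v w → R w v)
    (hg : ∀ {v w}, R v w → G.Adj v w) : G.Subgraph where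
  verts := {v | ∃ w, R v w}
  Adj := R
  adj_sub := hg
  edge_vert := fun h => ⟨_, h⟩
  symm := ⟨fun _ _ h => hs h⟩

lemma mkM_adj {R : V → V → Prop} {hs} {hg} {v w : V} :
    (mkM G R hs hg).Adj v w ↔ R v w := Iff.rfl

lemma mkM_support {R : V → V → Prop} {hs} {hg} :
    (mkM G R hs hg).support = {v | ∃ w, R v w} := rfl

lemma mkM_isMatching {R : V → V → Prop} {hs} {hg}
    (hu : ∀ v w w', R v w → R v w' → w = w') : (mkM G R hs hg).IsMatching := by
  rintro v ⟨w, hw⟩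
  exact ⟨w, hw, fun y hy => hu v y w hy hw⟩

/-- support of a matching has even ncard -/
lemma matching_even {X : G.Subgraph} (hX : X.IsMatching) : Even X.support.ncard := by
  classical
  have h1 : X.support = X.verts := hX.support_eq_verts
  have : Fintype X.verts := Fintype.ofFinite _
  have h2 := hX.even_card
  have h3 : X.verts.ncard = X.verts.toFinset.card := Set.ncard_eq_toFinset_card' _
  rw [h1, h3]; exact h2

lemma ncard_swap {S : Set V} {a b : V} (ha : a ∉ S) (hb : b ∈ insert a S) :
    (insert a S \ {b}).ncard = S.ncard := by
  rw [Set.ncard_diff_singleton_of_mem hb, Set.ncard_insert_of_notMem ha]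
  omega

lemma ncard_add2 {S : Set V} {x y : V} (hx : x ∉ S) (hy : y ∉ S) (hxy : x ≠ y) :
    (S ∪ {x, y}).ncard = S.ncard + 2 := by
  have h : S ∪ {x, y} = insert x (insert y S) := by
    ext v
    simp only [Set.mem_union, Set.mem_insert_iff, Set.mem_singleton_iff]
    tauto
  rw [h, Set.ncard_insert_of_notMem (by simp [hx, hxy]),
    Set.ncard_insert_of_notMem hy]

lemma addEdge {X : G.Subgraph} (hX : X.IsMatching) {x y : V}
    (hx : x ∉ X.support) (hy : y ∉ X.support) (hxy : G.Adj x y) :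
    ∃ Y : G.Subgraph, Y.IsMatching ∧ Y.support = X.support ∪ {x, y} := by
  have hxy' : x ≠ y := hxy.ne
  refine ⟨mkM G (fun v z => X.Adj v z ∨ (v = x ∧ z = y) ∨ (v = y ∧ z = x))
    (fun h => by tauto) (fun h => ?_), ?_, ?_⟩
  · rcases h with h | ⟨rfl, rfl⟩ | ⟨rfl, rfl⟩
    · exact h.adj_sub
    · exact hxy
    · exact hxy.symm
  · apply mkM_isMatching
    rintro v z z' h1 h2
    rcases h1 with h1 | ⟨rfl, rfl⟩ | ⟨rfl, rfl⟩
    · rcases h2 with h2 | ⟨h2a, h2b⟩ | ⟨h2a, h2b⟩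
      · exact matching_eq hX h1 h2
      · exact absurd ⟨_, h2a ▸ h1⟩ hx
      · exact absurd ⟨_, h2a ▸ h1⟩ hy
    · rcases h2 with h2 | ⟨h2a, h2b⟩ | ⟨h2a, h2b⟩
      · exact absurd ⟨_, h2⟩ hx
      · exact h2b.symm
      · exact absurd h2a hxy'
    · rcases h2 with h2 | ⟨h2a, h2b⟩ | ⟨h2a, h2b⟩
      · exact absurd ⟨_, h2⟩ hy
      · exact absurd h2a (Ne.symm hxy')
      · exact h2b.symm
  · rw [mkM_support]
    ext v
    constructor
    · rintro ⟨z, h | ⟨rfl, rfl⟩ | ⟨rfl, rfl⟩⟩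
      · exact Or.inl ⟨_, h⟩
      · simp
      · simp
    · rintro (h | h)
      · obtain ⟨z, hz⟩ := h; exact ⟨z, Or.inl hz⟩
      · rcases h with rfl | rfl
        · exact ⟨y, Or.inr (Or.inl ⟨rfl, rfl⟩)⟩
        · exact ⟨x, Or.inr (Or.inr ⟨rfl, rfl⟩)⟩

lemma removeEdge {X : G.Subgraph} (hX : X.IsMatching) {a b : V} (hab : X.Adj a b) :
    ∃ Y : G.Subgraph, Y.IsMatching ∧ Y.support = X.support \ {a, b} ∧
      (∀ v z, Y.Adj v z ↔ (X.Adj v z ∧ ¬(v = a ∧ z = b) ∧ ¬(v = b ∧ z = a))) := by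
  have hne : a ≠ b := hab.adj_sub.ne
  refine ⟨mkM G (fun v z => X.Adj v z ∧ ¬(v = a ∧ z = b) ∧ ¬(v = b ∧ z = a))
    (fun h => by tauto) (fun h => h.1.adj_sub), ?_, ?_, fun v z => Iff.rfl⟩
  · apply mkM_isMatching
    rintro v z z' ⟨h1, _⟩ ⟨h2, _⟩
    exact matching_eq hX h1 h2
  · rw [mkM_support]
    ext v
    constructor
    · rintro ⟨z, h, hp1, hp2⟩
      refine ⟨⟨z, h⟩, ?_⟩
      rintro (rfl | rfl)
      · exact hp1 ⟨rfl, matching_eq hX h hab⟩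
      · exact hp2 ⟨rfl, matching_eq hX h hab.symm⟩
    · rintro ⟨⟨z, hz⟩, hv⟩
      simp only [Set.mem_insert_iff, Set.mem_singleton_iff] at hv
      push_neg at hv
      exact ⟨z, hz, fun hh => hv.1 hh.1, fun hh => hv.2 hh.1⟩

lemma swap {X : G.Subgraph} (hX : X.IsMatching) {x u w : V}
    (hx : x ∉ X.support) (hadj : G.Adj x u) (huw : X.Adj u w) :
    ∃ Y : G.Subgraph, Y.IsMatching ∧ Y.support = insert x X.support \ {w} ∧
      Y.Adj x u ∧
      (∀ v, v ≠ x → v ≠ u → v ≠ w → ∀ z, (Y.Adj v z ↔ X.Adj v z)) := by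
  have hxu : x ≠ u := fun h => hx (h ▸ ⟨w, h ▸ huw⟩)
  have hxw : x ≠ w := fun h => hx (h ▸ ⟨u, h ▸ huw.symm⟩)
  have huw' : u ≠ w := huw.adj_sub.ne
  refine ⟨mkM G (fun v z => (X.Adj v z ∧ ¬(v = u ∧ z = w) ∧ ¬(v = w ∧ z = u)) ∨
      ((v = x ∧ z = u) ∨ (v = u ∧ z = x)))
    (fun h => by tauto) (fun h => ?_), ?_, ?_, ?_, ?_⟩
  · rcases h with ⟨h, _⟩ | ⟨rfl, rfl⟩ | ⟨rfl, rfl⟩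
    · exact h.adj_sub
    · exact hadj
    · exact hadj.symm
  · apply mkM_isMatching
    rintro v z z' h1 h2
    rcases h1 with ⟨h1, hp1, hq1⟩ | ⟨rfl, rfl⟩ | ⟨rfl, rfl⟩
    · rcases h2 with ⟨h2, hp2, hq2⟩ | ⟨rfl, rfl⟩ | ⟨rfl, rfl⟩
      · exact matching_eq hX h1 h2
      · exact absurd ⟨_, h1⟩ hx
      · exact absurd (hp1 ⟨rfl, matching_eq hX h1 huw⟩) not_false
    · rcases h2 with ⟨h2, hp2, hq2⟩ | ⟨h2a, h2b⟩ | ⟨h2a, h2b⟩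
      · exact absurd ⟨_, h2⟩ hx
      · exact h2b.symm
      · exact absurd h2a hxu
    · rcases h2 with ⟨h2, hp2, hq2⟩ | ⟨h2a, h2b⟩ | ⟨h2a, h2b⟩
      · exact absurd (hp2 ⟨rfl, matching_eq hX h2 huw⟩) not_false
      · exact absurd h2a.symm hxu
      · exact h2b.symm
  · rw [mkM_support]
    ext v
    constructor
    · rintro ⟨z, ⟨h, hp, hq⟩ | ⟨rfl, rfl⟩ | ⟨rfl, rfl⟩⟩
      · refine ⟨Or.inr ⟨z, h⟩, fun hv => ?_⟩
        simp only [Set.mem_singleton_iff] at hv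
        exact hq ⟨hv, matching_eq hX (hv ▸ h) huw.symm⟩
      · exact ⟨Or.inl rfl, by simpa using hxw⟩
      · exact ⟨Or.inr ⟨w, huw⟩, by simpa using huw'⟩
    · rintro ⟨hv, hvw⟩
      simp only [Set.mem_singleton_iff] at hvw
      rcases hv with rfl | ⟨z, hz⟩
      · exact ⟨u, Or.inr (Or.inl ⟨rfl, rfl⟩)⟩
      · by_cases hvu : v = u
        · exact ⟨x, Or.inr (Or.inr ⟨hvu, rfl⟩)⟩
        · exact ⟨z, Or.inl ⟨hz, fun hh => hvu hh.1, fun hh => hvw hh.1⟩⟩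
  · exact Or.inr (Or.inl ⟨rfl, rfl⟩)
  · intro v hvx hvu hvw z
    constructor
    · rintro (⟨h, _⟩ | ⟨rfl, rfl⟩ | ⟨rfl, rfl⟩)
      · exact h
      · exact absurd rfl hvx
      · exact absurd rfl hvu
    · intro h
      exact Or.inl ⟨h, fun hh => hvu hh.1, fun hh => hvw hh.1⟩

lemma switchPath {X : G.Subgraph} (hX : X.IsMatching) (k : ℕ) (p : ℕ → V)
    (hinj : ∀ i ≤ 2*k, ∀ j ≤ 2*k, p i = p j → i = j)
    (hadj : ∀ i < 2*k, G.Adj (p i) (p (i+1)))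
    (halt : ∀ i < 2*k, (X.Adj (p i) (p (i+1)) ↔ Odd i))
    (h0 : p 0 ∉ X.support) :
    ∃ Y : G.Subgraph, Y.IsMatching ∧ Y.support = insert (p 0) X.support \ {p (2*k)} ∧
      (∀ v, (∀ i ≤ 2*k, p i ≠ v) → ∀ z, (Y.Adj v z ↔ X.Adj v z)) := by
  induction k generalizing X p with
  | zero =>
    refine ⟨X, hX, ?_, fun v _ z => Iff.rfl⟩
    have h2 : 2*0 = 0 := rfl
    rw [h2, Set.insert_diff_of_mem _ (Set.mem_singleton _), Set.diff_singleton_eq_self h0]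
  | succ k ih =>
    have h01 : G.Adj (p 0) (p 1) := hadj 0 (by omega)
    have h12 : X.Adj (p 1) (p 2) := (halt 1 (by omega)).mpr ⟨0, by omega⟩
    obtain ⟨X', hX', hsupp', hxadj', hpres'⟩ := swap hX h0 h01 h12
    have h0' : p 2 ∉ X'.support := by rw [hsupp']; simp
    have hne : ∀ i ≤ 2*(k+1), ∀ j ≤ 2*(k+1), i ≠ j → p i ≠ p j := by
      intro i hi j hj hij h
      exact hij (hinj i hi j hj h)
    obtain ⟨Y, hY, hsuppY, hpresY⟩ := ih hX' (fun i => p (i+2))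
      (fun i hi j hj h => by
        have := hinj (i+2) (by omega) (j+2) (by omega) h
        omega)
      (fun i hi => hadj (i+2) (by omega))
      (fun i hi => by
        rcases Nat.eq_zero_or_pos i with rfl | hipos
        · exact iff_of_false (fun h => h0' ⟨_, h⟩) (by simp)
        · rw [hpres' _ (hne (i+2) (by omega) 0 (by omega) (by omega))
            (hne (i+2) (by omega) 1 (by omega) (by omega))
            (hne (i+2) (by omega) 2 (by omega) (by omega))]
          rw [halt (i+2) (by omega)]
          simp [Nat.odd_add]) h0'
    refine ⟨Y, hY, ?_, ?_⟩
    · rw [hsuppY, hsupp', Set.insert_diff_singleton]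
      have hp2 : p 2 ∈ insert (p 0) X.support := Or.inr ⟨_, h12.symm⟩
      rw [Set.insert_eq_self.mpr hp2]
      have h22 : 2*(k+1) = 2*k+2 := by ring
      rw [h22]
    · intro v hv z
      rw [hpresY v (fun i hi => hv (i+2) (by omega)) z,
        hpres' v (Ne.symm (hv 0 (by omega))) (Ne.symm (hv 1 (by omega)))
          (Ne.symm (hv 2 (by omega))) z]

lemma switch_avm {F : Set V} {X : G.Subgraph} (hXm : AvM G F X) (k : ℕ) (p : ℕ → V)
    (hinj : ∀ i ≤ 2*k, ∀ j ≤ 2*k, p i = p j → i = j)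
    (hadj : ∀ i < 2*k, G.Adj (p i) (p (i+1)))
    (halt : ∀ i < 2*k, (X.Adj (p i) (p (i+1)) ↔ Odd i))
    (h0 : p 0 ∉ X.support)
    (hF : ∀ i ≤ 2*k, p i ∉ F) :
    ∃ Y : G.Subgraph, AvM G F Y ∧ Y.support = insert (p 0) X.support \ {p (2*k)} ∧
      (∀ v, (∀ i ≤ 2*k, p i ≠ v) → ∀ z, (Y.Adj v z ↔ X.Adj v z)) := by
  obtain ⟨hX, hXF, hXb⟩ := hXm
  obtain ⟨Y, hY, hsupp, hpres⟩ := switchPath hX k p hinj hadj halt h0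
  have hend : p (2*k) ∈ insert (p 0) X.support := by
    rcases Nat.eq_zero_or_pos k with rfl | hk
    · exact Or.inl rfl
    · have hodd : Odd (2*k-1) := ⟨k-1, by omega⟩
      have hh := (halt (2*k-1) (by omega)).mpr hodd
      have h1 : 2*k-1+1 = 2*k := by omega
      rw [h1] at hh
      exact Or.inr ⟨_, hh.symm⟩
  have hcard : Y.support.ncard = X.support.ncard := by
    rw [hsupp]
    exact ncard_swap h0 hend
  refine ⟨Y, ⟨hY, ?_, ?_⟩, hsupp, hpres⟩
  · intro f hf
    rw [hsupp]
    intro ⟨hf1, _⟩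
    rcases hf1 with hf1 | hf1
    · exact hF 0 (by omega) (hf1 ▸ hf)
    · exact hXF f hf hf1
  · intro Z hZ hZF
    rw [hcard]
    exact hXb Z hZ hZF

lemma walk_exists {J N : G.Subgraph} (hJ : J.IsMatching) (hN : N.IsMatching) {u : V}
    (huJ : u ∈ J.support) (huN : u ∉ N.support) :
    ∃ (ℓ : ℕ) (w : ℕ → V), 0 < ℓ ∧ w 0 = u ∧
      (∀ i ≤ ℓ, ∀ j ≤ ℓ, w i = w j → i = j) ∧
      (∀ i < ℓ, (J.Adj (w i) (w (i+1)) ↔ Even i) ∧ (N.Adj (w i) (w (i+1)) ↔ Odd i)) ∧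
      ((Odd ℓ ∧ w ℓ ∉ N.support) ∨ (Even ℓ ∧ w ℓ ∉ J.support)) := by
  classical
  have key : ∀ m, ∀ ℓ (w : ℕ → V), Fintype.card V ≤ ℓ + m → 0 < ℓ → w 0 = u →
      (∀ i ≤ ℓ, ∀ j ≤ ℓ, w i = w j → i = j) →
      (∀ i < ℓ, (J.Adj (w i) (w (i+1)) ↔ Even i) ∧ (N.Adj (w i) (w (i+1)) ↔ Odd i)) →
      ∃ (ℓ' : ℕ) (w' : ℕ → V), 0 < ℓ' ∧ w' 0 = u ∧
        (∀ i ≤ ℓ', ∀ j ≤ ℓ', w' i = w' j → i = j) ∧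
        (∀ i < ℓ', (J.Adj (w' i) (w' (i+1)) ↔ Even i) ∧ (N.Adj (w' i) (w' (i+1)) ↔ Odd i)) ∧
        ((Odd ℓ' ∧ w' ℓ' ∉ N.support) ∨ (Even ℓ' ∧ w' ℓ' ∉ J.support)) := by
    intro m
    induction m with
    | zero =>
      intro ℓ w hm hpos h0 hinj halt
      exfalso
      have hcard : ℓ + 1 ≤ Fintype.card V := by
        have hinj' : Function.Injective (fun i : Fin (ℓ+1) => w i) := by
          intro a b h
          exact Fin.ext (hinj a (by omega) b (by omega) h)
        simpa using Fintype.card_le_of_injective _ hinj'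
      omega
    | succ m ih =>
      intro ℓ w hm hpos h0 hinj halt
      rcases Nat.even_or_odd ℓ with hpar | hpar
      · -- Even ℓ : next edge should be a J-edge
        by_cases hterm : w ℓ ∈ J.support
        · obtain ⟨z, hz⟩ := exists_partner hJ hterm
          have hl2 : 2 ≤ ℓ := by
            rcases hpar with ⟨a, ha⟩; omega
          have hprevN : N.Adj (w (ℓ-1)) (w ℓ) := by
            have := (halt (ℓ-1) (by omega)).2.mpr (by rcases hpar with ⟨a, ha⟩; exact ⟨a-1, by omega⟩)
            have he : ℓ - 1 + 1 = ℓ := by omega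
            rwa [he] at this
          have hprevJ : ¬ J.Adj (w (ℓ-1)) (w ℓ) := by
            intro h
            have := (halt (ℓ-1) (by omega)).1
            have he : ℓ - 1 + 1 = ℓ := by omega
            rw [he] at this
            have : Even (ℓ-1) := this.mp h
            rcases hpar with ⟨a, ha⟩; rcases this with ⟨b, hb⟩; omega
          have hzN : ¬ N.Adj (w ℓ) z := by
            intro h
            have hzw : z = w (ℓ-1) := matching_eq hN h hprevN.symm
            exact hprevJ (hzw ▸ hz).symm
          have hnew : ∀ j ≤ ℓ, w j ≠ z := by
            intro j hj hn
            rcases Nat.eq_zero_or_pos j with rfl | hjpos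
            · -- z = u : u's J-partner is w 1
              have h1 : J.Adj u (w 1) := by
                have := (halt 0 hpos).1.mpr (Even.zero)
                rwa [h0] at this
              have h2 : J.Adj u (w ℓ) := by
                rw [← h0, hn]; exact hz.symm
              have : w 1 = w ℓ := matching_eq hJ h1 h2
              have := hinj 1 (by omega) ℓ (by omega) this
              rcases hpar with ⟨a, ha⟩; omega
            · by_cases hjl : j = ℓ
              · subst hjl
                exact hz.adj_sub.ne (hn ▸ rfl)
              · have hjlt : j < ℓ := lt_of_le_of_ne hj hjl
                have hadjj : J.Adj (w j) (w ℓ) := by rw [hn]; exact hz.symm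
                rcases Nat.even_or_odd (j-1) with hje | hjo
                · have h1 : J.Adj (w (j-1)) (w j) := by
                    have := (halt (j-1) (by omega)).1.mpr hje
                    have he : j - 1 + 1 = j := by omega
                    rwa [he] at this
                  have : w ℓ = w (j-1) := matching_eq hJ hadjj h1.symm
                  have := hinj ℓ (le_refl _) (j-1) (by omega) this
                  omega
                · have hjev : Even j := by
                    rcases hjo with ⟨a, ha⟩; exact ⟨a+1, by omega⟩
                  have h1 : J.Adj (w j) (w (j+1)) := (halt j hjlt).1.mpr hjev
                  have : w ℓ = w (j+1) := matching_eq hJ hadjj h1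
                  have := hinj ℓ (le_refl _) (j+1) (by omega) this
                  rcases hpar with ⟨a, ha⟩; rcases hjev with ⟨b, hb⟩; omega
          set w' : ℕ → V := fun i => if i ≤ ℓ then w i else z with hw'
          have hw'le : ∀ i, i ≤ ℓ → w' i = w i := by intro i hi; simp [hw', hi]
          have hw'top : w' (ℓ+1) = z := by simp [hw']
          apply ih (ℓ+1) w' (by omega) (by omega) (by rw [hw'le 0 (by omega)]; exact h0)
          · intro i hi j hj hij
            by_cases hi' : i ≤ ℓ <;> by_cases hj' : j ≤ ℓ
            · exact hinj i hi' j hj' (by rwa [hw'le i hi', hw'le j hj'] at hij)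
            · exfalso
              have hj'' : j = ℓ+1 := by omega
              rw [hw'le i hi', hj'', hw'top] at hij
              exact hnew i hi' hij
            · exfalso
              have hi'' : i = ℓ+1 := by omega
              rw [hw'le j hj', hi'', hw'top] at hij
              exact hnew j hj' hij.symm
            · omega
          · intro i hilt
            by_cases hi' : i < ℓ
            · rw [hw'le i (by omega), hw'le (i+1) (by omega)]
              exact halt i hi'
            · have hi'' : i = ℓ := by omega
              subst hi''
              rw [hw'le i (le_refl _), hw'top]
              constructor
              · exact iff_of_true hz hpar
              · apply iff_of_false hzN
                intro hodd
                rcases hpar with ⟨a, ha⟩; rcases hodd with ⟨b, hb⟩; omega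
        · exact ⟨ℓ, w, hpos, h0, hinj, halt, Or.inr ⟨hpar, hterm⟩⟩
      · -- Odd ℓ : next edge should be an N-edge
        by_cases hterm : w ℓ ∈ N.support
        · obtain ⟨z, hz⟩ := exists_partner hN hterm
          have hprevJ : J.Adj (w (ℓ-1)) (w ℓ) := by
            have := (halt (ℓ-1) (by omega)).1.mpr (by rcases hpar with ⟨a, ha⟩; exact ⟨a, by omega⟩)
            have he : ℓ - 1 + 1 = ℓ := by omega
            rwa [he] at this
          have hprevN : ¬ N.Adj (w (ℓ-1)) (w ℓ) := by
            intro h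
            have := (halt (ℓ-1) (by omega)).2
            have he : ℓ - 1 + 1 = ℓ := by omega
            rw [he] at this
            have : Odd (ℓ-1) := this.mp h
            rcases hpar with ⟨a, ha⟩; rcases this with ⟨b, hb⟩; omega
          have hzJ : ¬ J.Adj (w ℓ) z := by
            intro h
            have hzw : z = w (ℓ-1) := matching_eq hJ h hprevJ.symm
            exact hprevN (hzw ▸ hz).symm
          have hnew : ∀ j ≤ ℓ, w j ≠ z := by
            intro j hj hn
            rcases Nat.eq_zero_or_pos j with rfl | hjpos
            · have h00 : N.Adj (w ℓ) (w 0) := by rw [hn]; exact hz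
              rw [h0] at h00
              exact huN ⟨_, h00.symm⟩
            · by_cases hjl : j = ℓ
              · subst hjl
                exact hz.adj_sub.ne (hn ▸ rfl)
              · have hjlt : j < ℓ := lt_of_le_of_ne hj hjl
                have hadjj : N.Adj (w j) (w ℓ) := by rw [hn]; exact hz.symm
                rcases Nat.even_or_odd (j-1) with hje | hjo
                · have hjodd : Odd j := by
                    rcases hje with ⟨a, ha⟩; exact ⟨a, by omega⟩
                  have h1 : N.Adj (w j) (w (j+1)) := (halt j hjlt).2.mpr hjodd
                  have : w ℓ = w (j+1) := matching_eq hN hadjj h1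
                  have := hinj ℓ (le_refl _) (j+1) (by omega) this
                  rcases hpar with ⟨a, ha⟩; rcases hjodd with ⟨b, hb⟩; omega
                · have h1 : N.Adj (w (j-1)) (w j) := by
                    have := (halt (j-1) (by omega)).2.mpr hjo
                    have he : j - 1 + 1 = j := by omega
                    rwa [he] at this
                  have : w ℓ = w (j-1) := matching_eq hN hadjj h1.symm
                  have := hinj ℓ (le_refl _) (j-1) (by omega) this
                  omega
          set w' : ℕ → V := fun i => if i ≤ ℓ then w i else z with hw'
          have hw'le : ∀ i, i ≤ ℓ → w' i = w i := by intro i hi; simp [hw', hi]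
          have hw'top : w' (ℓ+1) = z := by simp [hw']
          apply ih (ℓ+1) w' (by omega) (by omega) (by rw [hw'le 0 (by omega)]; exact h0)
          · intro i hi j hj hij
            by_cases hi' : i ≤ ℓ <;> by_cases hj' : j ≤ ℓ
            · exact hinj i hi' j hj' (by rwa [hw'le i hi', hw'le j hj'] at hij)
            · exfalso
              have hj'' : j = ℓ+1 := by omega
              rw [hw'le i hi', hj'', hw'top] at hij
              exact hnew i hi' hij
            · exfalso
              have hi'' : i = ℓ+1 := by omega
              rw [hw'le j hj', hi'', hw'top] at hij
              exact hnew j hj' hij.symm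
            · omega
          · intro i hilt
            by_cases hi' : i < ℓ
            · rw [hw'le i (by omega), hw'le (i+1) (by omega)]
              exact halt i hi'
            · have hi'' : i = ℓ := by omega
              subst hi''
              rw [hw'le i (le_refl _), hw'top]
              constructor
              · apply iff_of_false hzJ
                intro heven
                rcases hpar with ⟨a, ha⟩; rcases heven with ⟨b, hb⟩; omega
              · exact iff_of_true hz hpar
        · exact ⟨ℓ, w, hpos, h0, hinj, halt, Or.inl ⟨hpar, hterm⟩⟩
  -- initial walk of length 1
  obtain ⟨u1, hu1⟩ := exists_partner hJ huJ
  set w0 : ℕ → V := fun i => if i = 0 then u else u1 with hw0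
  have hw00 : w0 0 = u := by simp [hw0]
  have hw01 : w0 1 = u1 := by simp [hw0]
  apply key (Fintype.card V) 1 w0 (by omega) (by omega) hw00
  · intro i hi j hj hij
    interval_cases i <;> interval_cases j
    · rfl
    · exfalso; rw [hw00, hw01] at hij; exact hu1.adj_sub.ne hij
    · exfalso; rw [hw00, hw01] at hij; exact hu1.adj_sub.ne hij.symm
    · rfl
  · intro i hi
    have hi0 : i = 0 := by omega
    subst hi0
    rw [hw00, hw01]
    constructor
    · exact iff_of_true hu1 Even.zero
    · apply iff_of_false (fun h => huN ⟨_, h⟩)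
      simp

lemma bot_matching : (⊥ : G.Subgraph).IsMatching := by
  intro v hv
  simp only [Subgraph.verts_bot, Set.mem_empty_iff_false] at hv

lemma exists_avm (F : Set V) : ∃ X : G.Subgraph, AvM G F X := by
  classical
  set S : Set ℕ := {n | ∃ X : G.Subgraph, X.IsMatching ∧ (∀ f ∈ F, f ∉ X.support) ∧
    X.support.ncard = n} with hS
  have hbot : (⊥ : G.Subgraph).support = ∅ := by
    ext v; simp [Subgraph.mem_support]
  have hne : (0:ℕ) ∈ S := ⟨⊥, bot_matching, by simp [hbot], by simp [hbot]⟩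
  have hbdd : BddAbove S := by
    refine ⟨Fintype.card V, ?_⟩
    rintro n ⟨X, _, _, hn⟩
    rw [← hn]
    have := Set.ncard_le_ncard (Set.subset_univ X.support) Set.finite_univ
    rwa [Set.ncard_univ, Nat.card_eq_fintype_card] at this
  have hmem := Nat.sSup_mem ⟨0, hne⟩ hbdd
  obtain ⟨X, hX1, hX2, hX3⟩ := hmem
  refine ⟨X, hX1, hX2, ?_⟩
  intro Y hY1 hY2
  rw [hX3]
  exact le_csSup hbdd ⟨Y, hY1, hY2, rfl⟩

lemma walk_mem_support {J N : G.Subgraph} {ℓ : ℕ} {w : ℕ → V} (h0 : w 0 ∈ J.support)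
    (halt : ∀ i < ℓ, (J.Adj (w i) (w (i+1)) ↔ Even i) ∧ (N.Adj (w i) (w (i+1)) ↔ Odd i)) :
    ∀ i ≤ ℓ, w i ∈ J.support ∪ N.support := by
  intro i hi
  rcases Nat.eq_zero_or_pos i with rfl | hp
  · exact Or.inl h0
  · have hi1 : i - 1 < ℓ := by omega
    have he : i - 1 + 1 = i := by omega
    rcases Nat.even_or_odd (i-1) with hpar | hpar
    · left
      have := (halt (i-1) hi1).1.mpr hpar
      rw [he] at this
      exact ⟨_, this.symm⟩
    · right
      have := (halt (i-1) hi1).2.mpr hpar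
      rw [he] at this
      exact ⟨_, this.symm⟩

lemma no_augpath {F : Set V} {X : G.Subgraph} (hXm : AvM G F X) (k : ℕ) (p : ℕ → V)
    (hinj : ∀ i ≤ 2*k+1, ∀ j ≤ 2*k+1, p i = p j → i = j)
    (hadj : ∀ i < 2*k+1, G.Adj (p i) (p (i+1)))
    (halt : ∀ i < 2*k+1, (X.Adj (p i) (p (i+1)) ↔ Odd i))
    (h0 : p 0 ∉ X.support) (htop : p (2*k+1) ∉ X.support)
    (hF : ∀ i ≤ 2*k+1, p i ∉ F) : False := by
  obtain ⟨Y, hYm, hsupp, hpres⟩ := switchPath hXm.1 k p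
    (fun i hi j hj h => hinj i (by omega) j (by omega) h)
    (fun i hi => hadj i (by omega)) (fun i hi => halt i (by omega)) h0
  have hend : p (2*k) ∈ insert (p 0) X.support := by
    rcases Nat.eq_zero_or_pos k with rfl | hk
    · exact Or.inl rfl
    · have hodd : Odd (2*k-1) := ⟨k-1, by omega⟩
      have hh := (halt (2*k-1) (by omega)).mpr hodd
      have h1 : 2*k-1+1 = 2*k := by omega
      rw [h1] at hh
      exact Or.inr ⟨_, hh.symm⟩
  have hYcard : Y.support.ncard = X.support.ncard := by
    rw [hsupp]; exact ncard_swap h0 hend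
  have h2k : p (2*k) ∉ Y.support := by rw [hsupp]; simp
  have htop' : p (2*k+1) ∉ Y.support := by
    rw [hsupp]
    rintro ⟨h1 | h1, _⟩
    · have := hinj (2*k+1) (by omega) 0 (by omega) h1
      omega
    · exact htop h1
  have hne : p (2*k) ≠ p (2*k+1) := by
    intro h
    have := hinj (2*k) (by omega) (2*k+1) (by omega) h
    omega
  obtain ⟨Z, hZm, hZsupp⟩ := addEdge hYm h2k htop' (hadj (2*k) (by omega))
  have hZcard : Z.support.ncard = X.support.ncard + 2 := by
    rw [hZsupp, ncard_add2 h2k htop' hne, hYcard]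
  have hZF : ∀ f ∈ F, f ∉ Z.support := by
    intro f hf hmem
    rw [hZsupp] at hmem
    rcases hmem with hmem | hmem
    · rw [hsupp] at hmem
      rcases hmem.1 with h1 | h1
      · exact hF 0 (by omega) (h1 ▸ hf)
      · exact hXm.2.1 f hf h1
    · rcases hmem with rfl | rfl
      · exact hF (2*k) (by omega) hf
      · exact hF (2*k+1) (by omega) hf
  have := hXm.2.2 Z hZm hZF
  omega

lemma reach {F : Set V} {X : G.Subgraph} (hXm : AvM G F X) {v : V} (hvF : v ∉ F)
    (hv : ∃ Nn : G.Subgraph, AvM G F Nn ∧ v ∉ Nn.support) :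
    ∃ (k : ℕ) (p : ℕ → V), p (2*k) = v ∧ p 0 ∉ X.support ∧
      (∀ i ≤ 2*k, ∀ j ≤ 2*k, p i = p j → i = j) ∧
      (∀ i < 2*k, G.Adj (p i) (p (i+1))) ∧
      (∀ i < 2*k, (X.Adj (p i) (p (i+1)) ↔ Odd i)) ∧
      (∀ i ≤ 2*k, p i ∉ F) := by
  classical
  by_cases hvX : v ∈ X.support
  · obtain ⟨Nn, hNm, hvN⟩ := hv
    obtain ⟨ℓ, w, hpos, hw0, hinj, halt, hterm⟩ := walk_exists hXm.1 hNm.1 hvX hvN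
    have hwsupp := walk_mem_support (hw0 ▸ hvX) halt
    rcases hterm with ⟨hodd, hend⟩ | ⟨heven, hend⟩
    · exfalso
      obtain ⟨k, hk⟩ := hodd
      have hFn : ∀ i ≤ ℓ, w i ∉ F := by
        intro i hi hf
        rcases hwsupp i hi with h | h
        · exact hXm.2.1 _ hf h
        · exact hNm.2.1 _ hf h
      refine no_augpath hNm k w ?_ ?_ ?_ ?_ ?_ ?_
      · intro i hi j hj h; exact hinj i (by omega) j (by omega) h
      · intro i hi
        rcases Nat.even_or_odd i with hp | hp
        · exact ((halt i (by omega)).1.mpr hp).adj_sub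
        · exact ((halt i (by omega)).2.mpr hp).adj_sub
      · intro i hi; exact (halt i (by omega)).2
      · rw [hw0]; exact hvN
      · rw [← hk]; exact hend
      · intro i hi; exact hFn i (by omega)
    · obtain ⟨k, hk⟩ := heven
      have hlk : ℓ = 2*k := by omega
      refine ⟨k, fun i => w (ℓ - i), ?_, ?_, ?_, ?_, ?_, ?_⟩
      · rw [← hlk]
        simp [hw0]
      · simpa using hend
      · intro i hi j hj h
        have := hinj (ℓ - i) (by omega) (ℓ - j) (by omega) h
        omega
      · intro i hi
        show G.Adj (w (ℓ - i)) (w (ℓ - (i+1)))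
        have h1 : ℓ - i - 1 < ℓ := by omega
        have h2 : ℓ - i - 1 + 1 = ℓ - i := by omega
        rcases Nat.even_or_odd (ℓ - i - 1) with hp | hp
        · have := ((halt _ h1).1.mpr hp).adj_sub
          rw [h2] at this
          have h3 : ℓ - (i+1) = ℓ - i - 1 := by omega
          rw [h3]
          exact this.symm
        · have := ((halt _ h1).2.mpr hp).adj_sub
          rw [h2] at this
          have h3 : ℓ - (i+1) = ℓ - i - 1 := by omega
          rw [h3]
          exact this.symm
      · intro i hi
        show X.Adj (w (ℓ - i)) (w (ℓ - (i+1))) ↔ Odd i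
        have h1 : ℓ - i - 1 < ℓ := by omega
        have h2 : ℓ - i - 1 + 1 = ℓ - i := by omega
        have h3 : ℓ - (i+1) = ℓ - i - 1 := by omega
        have hiff := (halt _ h1).1
        rw [h2] at hiff
        rw [h3]
        rw [Subgraph.adj_comm] at hiff
        rw [hiff]
        rcases Nat.even_or_odd i with hp | hp
        · obtain ⟨a, ha⟩ := hp
          apply iff_of_false
          · intro h
            obtain ⟨b, hb⟩ := h
            omega
          · intro h
            obtain ⟨b, hb⟩ := h
            omega
        · obtain ⟨a, ha⟩ := hp
          apply iff_of_true
          · exact ⟨k - a - 1, by omega⟩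
          · exact ⟨a, ha⟩
      · intro i hi hf
        rcases hwsupp (ℓ - i) (by omega) with h | h
        · exact hXm.2.1 _ hf h
        · exact hNm.2.1 _ hf h
  · exact ⟨0, fun _ => v, rfl, by simpa using hvX, by intro i hi j hj _; omega,
      by intro i hi; omega, by intro i hi; omega, by intro i hi; exact hvF⟩

def DF (G : SimpleGraph V) (F : Set V) : Set V :=
  {v | v ∉ F ∧ ∃ X : G.Subgraph, AvM G F X ∧ v ∉ X.support}

lemma DF_empty : DF G ∅ = Dset G := by
  ext v
  simp only [DF, Dset, Set.mem_setOf_eq, Set.mem_empty_iff_false, not_false_iff, true_and]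
  constructor
  · rintro ⟨X, hX, hv⟩; exact ⟨X, (avm_empty_iff X).mp hX, hv⟩
  · rintro ⟨X, hX, hv⟩; exact ⟨X, (avm_empty_iff X).mpr hX, hv⟩

lemma covered_of_not_DF {F : Set V} {v : V} (hvF : v ∉ F) (hvD : v ∉ DF G F)
    {X : G.Subgraph} (hX : AvM G F X) : v ∈ X.support := by
  by_contra h
  exact hvD ⟨hvF, X, hX, h⟩

lemma ncard_diff2 {S : Set V} {a b : V} (ha : a ∈ S) (hb : b ∈ S) (hab : a ≠ b) :
    (S \ {a, b}).ncard + 2 = S.ncard := by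
  have h1 : S \ {a,b} = (S \ {a}) \ {b} := by
    ext x
    simp only [Set.mem_diff, Set.mem_insert_iff, Set.mem_singleton_iff]
    tauto
  have hbmem : b ∈ S \ {a} := ⟨hb, by simp [Ne.symm hab]⟩
  have h2 : 1 < S.ncard := (Set.one_lt_ncard_iff (Set.toFinite S)).mpr ⟨a, b, ha, hb, hab⟩
  rw [h1, Set.ncard_diff_singleton_of_mem hbmem, Set.ncard_diff_singleton_of_mem ha]
  omega

lemma bound_insert {F : Set V} (hDF : DF G F = Dset G) {a : V} (ha : a ∈ Aset G) (haF : a ∉ F)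
    {X : G.Subgraph} (hX : AvM G F X) {Z : G.Subgraph} (hZ : Z.IsMatching)
    (hZF : ∀ f ∈ insert a F, f ∉ Z.support) : Z.support.ncard + 2 ≤ X.support.ncard := by
  have h2 : Z.support.ncard ≤ X.support.ncard := hX.2.2 Z hZ (fun f hf => hZF f (Or.inr hf))
  have h3 : Z.support.ncard ≠ X.support.ncard := by
    intro h
    have hZmaxF : AvM G F Z := ⟨hZ, fun f hf => hZF f (Or.inr hf),
      fun W hW hWF => h ▸ hX.2.2 W hW hWF⟩
    have : a ∈ DF G F := ⟨haF, Z, hZmaxF, hZF a (Or.inl rfl)⟩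
    rw [hDF] at this
    exact ha.1 this
  obtain ⟨x1, hx1⟩ := matching_even hX.1
  obtain ⟨z1, hz1⟩ := matching_even hZ
  omega

lemma insert_size {F : Set V} (hDF : DF G F = Dset G) {a : V} (ha : a ∈ Aset G) (haF : a ∉ F)
    {X J : G.Subgraph} (hX : AvM G F X) (hJ : AvM G (insert a F) J) :
    J.support.ncard + 2 = X.support.ncard := by
  have h1 := bound_insert hDF ha haF hX hJ.1 hJ.2.1
  -- construct an (insert a F)-avoiding matching of size |X| - 2
  have haX : a ∈ X.support := by
    apply covered_of_not_DF haF _ hX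
    rw [hDF]; exact ha.1
  obtain ⟨b, hb⟩ := exists_partner hX.1 haX
  obtain ⟨Y, hYm, hYsupp, _⟩ := removeEdge hX.1 hb
  have hYF : ∀ f ∈ insert a F, f ∉ Y.support := by
    intro f hf
    rw [hYsupp]
    rcases hf with rfl | hf
    · simp
    · intro ⟨h1, _⟩; exact hX.2.1 f hf h1
  have hYcard : Y.support.ncard + 2 = X.support.ncard := by
    rw [hYsupp]
    exact ncard_diff2 haX ⟨_, hb.symm⟩ hb.adj_sub.ne
  have h4 := hJ.2.2 Y hYm hYF
  omega

lemma walk_covered_J {J N : G.Subgraph} {ℓ : ℕ} {w : ℕ → V} (h0 : w 0 ∈ J.support)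
    (halt : ∀ i < ℓ, (J.Adj (w i) (w (i+1)) ↔ Even i) ∧ (N.Adj (w i) (w (i+1)) ↔ Odd i)) :
    ∀ i < ℓ, w i ∈ J.support := by
  intro i hi
  rcases Nat.even_or_odd i with hp | hp
  · exact ⟨_, (halt i hi).1.mpr hp⟩
  · obtain ⟨c, hc⟩ := hp
    have hi1 : i - 1 < ℓ := by omega
    have he : i - 1 + 1 = i := by omega
    have hpe : Even (i-1) := ⟨c, by omega⟩
    have := (halt (i-1) hi1).1.mpr hpe
    rw [he] at this
    exact ⟨_, this.symm⟩

lemma stability {F : Set V} (hDF : DF G F = Dset G) {a : V}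
    (ha : a ∈ Aset G) (haF : a ∉ F) : DF G (insert a F) = Dset G := by
  classical
  obtain ⟨X, hXm⟩ := exists_avm (G := G) F
  ext v
  constructor
  · rintro ⟨hvF, J, hJ, hvJ⟩
    by_contra hvD
    have hvDF : v ∉ DF G F := by rw [hDF]; exact hvD
    obtain ⟨u, huD, hau⟩ := ha.2
    have huDF : u ∈ DF G F := by rw [hDF]; exact huD
    obtain ⟨huF, N, hNm, huN⟩ := huDF
    have hvF' : v ∉ F := fun hf => hvF (Or.inr hf)
    have hva : v ≠ a := fun h => hvF (Or.inl h)
    have hvu : v ≠ u := fun h => hvD (h ▸ huD)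
    have hau' : a ≠ u := fun h => ha.1 (h ▸ huD)
    have hvN : v ∈ N.support := covered_of_not_DF hvF' hvDF hNm
    have haJ : a ∉ J.support := hJ.2.1 a (Or.inl rfl)
    have haN : a ∈ N.support := by
      apply covered_of_not_DF haF _ hNm
      rw [hDF]; exact ha.1
    have hsize := insert_size hDF ha haF hXm hJ
    -- helper to conclude: an F-avoiding matching of size |X| missing v gives contradiction
    have conclude : ∀ Z : G.Subgraph, Z.IsMatching → (∀ f ∈ F, f ∉ Z.support) →
        Z.support.ncard = X.support.ncard → v ∉ Z.support → False := by
      intro Z hZ hZF hZc hvZ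
      apply hvDF
      exact ⟨hvF', Z, ⟨hZ, hZF, fun W hW hWF => hZc ▸ hXm.2.2 W hW hWF⟩, hvZ⟩
    by_cases huJ : u ∈ J.support
    · obtain ⟨ℓ, w, hpos, hw0, hinj, halt, hterm⟩ := walk_exists hJ.1 hNm.1 huJ huN
      have hwsupp := walk_mem_support (hw0 ▸ huJ) halt
      have hwcov := walk_covered_J (hw0 ▸ huJ) halt
      have hFw : ∀ i ≤ ℓ, w i ∉ F := fun i hi hf =>
        (hwsupp i hi).elim (fun h => hJ.2.1 _ (Or.inr hf) h) (fun h => hNm.2.1 _ hf h)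
      -- v is not a walk vertex except possibly the end
      have hvw : ∀ i < ℓ, w i ≠ v := by
        intro i hi h
        rcases Nat.eq_zero_or_pos i with rfl | hp
        · rw [hw0] at h; exact hvu h.symm
        · exact hvJ (h ▸ hwcov i hi)
      -- a is not a walk vertex except possibly the end
      have haw : ∀ i < ℓ, w i ≠ a := by
        intro i hi h
        rcases Nat.eq_zero_or_pos i with rfl | hp
        · rw [hw0] at h; exact hau' h.symm
        · exact haJ (h ▸ hwcov i hi)
      rcases hterm with ⟨hodd, hend⟩ | ⟨heven, hend⟩
      · -- N-augmenting path: contradiction with maximality of N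
        obtain ⟨k, hk⟩ := hodd
        have hℓ : ℓ = 2*k+1 := by omega
        subst hℓ
        exact no_augpath hNm k w hinj
          (fun i hi => by
            rcases Nat.even_or_odd i with hp | hp
            · exact ((halt i hi).1.mpr hp).adj_sub
            · exact ((halt i hi).2.mpr hp).adj_sub)
          (fun i hi => (halt i hi).2) (hw0 ▸ huN) hend (fun i hi => hFw i hi)
      · obtain ⟨k, hk⟩ := heven
        have hℓ : ℓ = 2*k := by omega
        subst hℓ
        set q := w (2*k) with hq
        by_cases hqav : q = a ∨ q = v
        · -- switch N along the walk (as a path for N starting at u): exposes q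
          obtain ⟨N', hN'm, hN'supp, _⟩ := switch_avm hNm k w hinj
            (fun i hi => by
              rcases Nat.even_or_odd i with hp | hp
              · exact ((halt i hi).1.mpr hp).adj_sub
              · exact ((halt i hi).2.mpr hp).adj_sub)
            (fun i hi => (halt i hi).2) (hw0 ▸ huN) hFw
          have hqN' : q ∉ N'.support := by rw [hN'supp]; simp; exact fun _ => hq
          have hqF : q ∉ F := hFw (2*k) (le_refl _)
          have hqDF : q ∈ DF G F := ⟨hqF, N', hN'm, hqN'⟩
          rw [hDF] at hqDF
          rcases hqav with rfl | rfl
          · exact ha.1 hqDF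
          · exact hvD hqDF
        · push_neg at hqav
          obtain ⟨hqa, hqv⟩ := hqav
          -- switch J along the reversed walk: exposes u, then add edge au
          have hqJ : q ∉ J.support := hend
          have hFw' : ∀ i ≤ 2*k, w (2*k - i) ∉ insert a F := by
            intro i hi
            intro hmem
            rcases hmem with hmem | hmem
            · rcases Nat.eq_zero_or_pos i with rfl | hp
              · exact hqa (by simpa using hmem)
              · exact haw (2*k - i) (by omega) hmem
            · exact hFw (2*k - i) (by omega) hmem
          obtain ⟨J', hJ'm, hJ'supp, _⟩ := switch_avm hJ k (fun i => w (2*k - i))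
            (fun i hi j hj h => by
              have := hinj (2*k - i) (by omega) (2*k - j) (by omega) h
              omega)
            (fun i hi => by
              show G.Adj (w (2*k - i)) (w (2*k - (i+1)))
              have h1 : 2*k - i - 1 < 2*k := by omega
              have h2 : 2*k - i - 1 + 1 = 2*k - i := by omega
              have h3 : 2*k - (i+1) = 2*k - i - 1 := by omega
              rw [h3]
              rcases Nat.even_or_odd (2*k - i - 1) with hp | hp
              · have := ((halt _ h1).1.mpr hp).adj_sub
                rw [h2] at this
                exact this.symm
              · have := ((halt _ h1).2.mpr hp).adj_sub
                rw [h2] at this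
                exact this.symm)
            (fun i hi => by
              show J.Adj (w (2*k - i)) (w (2*k - (i+1))) ↔ Odd i
              have h1 : 2*k - i - 1 < 2*k := by omega
              have h2 : 2*k - i - 1 + 1 = 2*k - i := by omega
              have h3 : 2*k - (i+1) = 2*k - i - 1 := by omega
              have hiff := (halt _ h1).1
              rw [h2] at hiff
              rw [h3, Subgraph.adj_comm, hiff]
              constructor
              · rintro ⟨c, hc⟩
                exact ⟨k - c - 1, by omega⟩
              · rintro ⟨c, hc⟩
                exact ⟨k - c - 1, by omega⟩)
            (by simpa using hqJ) hFw'
          -- J' misses u, v, a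
          have hq0 : w (2*k - 0) = q := rfl
          have hu2k : w (2*k - 2*k) = u := by simpa using hw0
          have huJ' : u ∉ J'.support := by
            rw [hJ'supp, hu2k]
            simp
          have hvJ' : v ∉ J'.support := by
            rw [hJ'supp]
            rintro ⟨h1 | h1, _⟩
            · exact hqv (by rw [← hq0]; exact h1.symm)
            · exact hvJ h1
          have haJ' : a ∉ J'.support := by
            rw [hJ'supp]
            rintro ⟨h1 | h1, _⟩
            · exact hqa (by rw [← hq0]; exact h1.symm)
            · exact haJ h1
          obtain ⟨Z, hZm, hZsupp⟩ := addEdge hJ'm.1 haJ' huJ' hau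
          have hZcard : Z.support.ncard = X.support.ncard := by
            rw [hZsupp, ncard_add2 haJ' huJ' hau']
            have hJ'card : J'.support.ncard = J.support.ncard := by
              rw [hJ'supp, hq0, hu2k]
              apply ncard_swap (by simpa using hqJ)
              rcases Nat.eq_zero_or_pos k with rfl | hkpos
              · exact Or.inl (by rw [hq]; exact hw0.symm)
              · right
                have h1 : 2*k - 1 < 2*k := by omega
                have hpe : Even (2*k - (2*k-1) - 1) := by
                  have : 2*k - (2*k-1) - 1 = 0 := by omega
                  rw [this]; exact Even.zero
                -- u = w 0 is covered by J via edge 0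
                have := (halt 0 (by omega)).1.mpr Even.zero
                rw [hw0] at this
                exact ⟨_, this⟩
            omega
          have hZF : ∀ f ∈ F, f ∉ Z.support := by
            intro f hf hmem
            rw [hZsupp] at hmem
            rcases hmem with hmem | hmem
            · rw [hJ'supp] at hmem
              rcases hmem.1 with h1 | h1
              · exact hFw (2*k) (le_refl _) (h1 ▸ hf)
              · exact hJ.2.1 f (Or.inr hf) h1
            · rcases hmem with rfl | rfl
              · exact haF hf
              · exact huF hf
          have hvZ : v ∉ Z.support := by
            rw [hZsupp]
            rintro (h | h)
            · exact hvJ' h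
            · rcases h with rfl | rfl
              · exact hva rfl
              · exact hvu rfl
          exact conclude Z hZm hZF hZcard hvZ
    · -- u not covered by J: add the edge au directly
      obtain ⟨Z, hZm, hZsupp⟩ := addEdge hJ.1 haJ huJ hau
      have hZcard : Z.support.ncard = X.support.ncard := by
        rw [hZsupp, ncard_add2 haJ huJ hau']
        omega
      have hZF : ∀ f ∈ F, f ∉ Z.support := by
        intro f hf hmem
        rw [hZsupp] at hmem
        rcases hmem with hmem | hmem
        · exact hJ.2.1 f (Or.inr hf) hmem
        · rcases hmem with rfl | rfl
          · exact haF hf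
          · exact huF hf
      have hvZ : v ∉ Z.support := by
        rw [hZsupp]
        rintro (h | h)
        · exact hvJ h
        · rcases h with rfl | rfl
          · exact hva rfl
          · exact hvu rfl
      exact conclude Z hZm hZF hZcard hvZ
  · intro hvD
    have hvDF : v ∈ DF G F := by rw [hDF]; exact hvD
    obtain ⟨hvF, N₀, hN₀, hvN₀⟩ := hvDF
    have hva : v ≠ a := fun h => ha.1 (h ▸ hvD)
    have haN₀ : a ∈ N₀.support := by
      apply covered_of_not_DF haF _ hN₀
      rw [hDF]; exact ha.1
    obtain ⟨b, hb⟩ := exists_partner hN₀.1 haN₀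
    obtain ⟨Y, hYm, hYsupp, _⟩ := removeEdge hN₀.1 hb
    have hYF : ∀ f ∈ insert a F, f ∉ Y.support := by
      intro f hf
      rw [hYsupp]
      rcases hf with rfl | hf
      · simp
      · intro ⟨h1, _⟩; exact hN₀.2.1 f hf h1
    have hYcard : Y.support.ncard + 2 = N₀.support.ncard := by
      rw [hYsupp]
      exact ncard_diff2 haN₀ ⟨_, hb.symm⟩ hb.adj_sub.ne
    have hvY : v ∉ Y.support := by
      rw [hYsupp]
      rintro ⟨h1, _⟩
      exact hvN₀ h1
    refine ⟨?_, Y, ⟨hYm, hYF, ?_⟩, hvY⟩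
    · rintro (h | h)
      · exact hva h
      · exact hvF h
    · intro Z hZ hZF
      have := bound_insert hDF ha haF hN₀ hZ hZF
      omega

lemma ST : ∀ (n : ℕ) (F : Set V), F ⊆ Aset G → F.ncard = n → DF G F = Dset G := by
  intro n
  induction n with
  | zero =>
    intro F hFA hF
    have hFe : F = ∅ := (Set.ncard_eq_zero (Set.toFinite F)).mp hF
    rw [hFe]
    exact DF_empty
  | succ n ih =>
    intro F hFA hF
    have hne : F.Nonempty := by
      rw [Set.nonempty_iff_ne_empty]
      intro h
      rw [h, Set.ncard_empty] at hF
      omega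
    obtain ⟨a, haF⟩ := hne
    have hF' : (F \ {a}).ncard = n := by
      rw [Set.ncard_diff_singleton_of_mem haF]
      omega
    have hprev := ih (F \ {a}) (fun x hx => hFA hx.1) hF'
    have hstep := stability hprev (hFA haF) (by simp)
    have hins : insert a (F \ {a}) = F := by
      rw [Set.insert_diff_singleton, Set.insert_eq_self.mpr haF]
    rwa [hins] at hstep

lemma ST_A : DF G (Aset G) = Dset G := ST (Aset G).ncard (Aset G) (fun _ h => h) rfl

lemma not_dset_covered {v : V} (hv : v ∉ Dset G) {M : G.Subgraph} (hM : IsMaxMatching G M) :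
    v ∈ M.support := by
  by_contra h
  exact hv ⟨M, hM, h⟩

/-- key lemma: in a maximum matching, the partner of any vertex of `A(G)` is in `D(G)` -/
lemma partner_in_D {M : G.Subgraph} (hM : IsMaxMatching G M) {a b : V}
    (ha : a ∈ Aset G) (hab : M.Adj a b) : b ∈ Dset G := by
  classical
  have hMav : AvM G ∅ M := (avm_empty_iff M).mpr hM
  obtain ⟨d, hdD, had⟩ := ha.2
  have hdav : ∃ Nn : G.Subgraph, AvM G ∅ Nn ∧ d ∉ Nn.support := by
    obtain ⟨Nn, hNn, hd⟩ := hdD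
    exact ⟨Nn, (avm_empty_iff Nn).mpr hNn, hd⟩
  obtain ⟨k, p, hpend, hp0, hinj, hadj, halt, _⟩ := reach hMav (by simp) hdav
  have hane : ∀ j, a ≠ p j → b ≠ p j → True := fun _ _ _ => trivial
  by_cases hap : ∃ j, j ≤ 2*k ∧ p j = a
  · obtain ⟨j, hj, hja⟩ := hap
    have hj0 : 0 < j := by
      rcases Nat.eq_zero_or_pos j with rfl | h
      · exfalso
        apply hp0
        rw [hja]
        exact ⟨b, hab⟩
      · exact h
    rcases Nat.even_or_odd j with hje | hjo
    · -- a at even position: switching the prefix would expose a : contradiction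
      exfalso
      obtain ⟨c, hc⟩ := hje
      have hc' : j = 2*c := by omega
      obtain ⟨Y, hYm, hYsupp, _⟩ := switch_avm hMav c p
        (fun i hi j' hj' h => hinj i (by omega) j' (by omega) h)
        (fun i hi => hadj i (by omega)) (fun i hi => halt i (by omega)) hp0
        (fun i hi => by simp)
      have haY : a ∉ Y.support := by
        rw [hYsupp, ← hc', hja]
        simp
      exact ha.1 ⟨Y, (avm_empty_iff Y).mp hYm, haY⟩
    · -- a at odd position: partner is the next vertex, at even position
      obtain ⟨c, hc⟩ := hjo
      have hjlt : j < 2*k := by omega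
      have hpadj : M.Adj (p j) (p (j+1)) := (halt j hjlt).mpr ⟨c, hc⟩
      have hbp : b = p (j+1) := by
        rw [hja] at hpadj
        exact matching_eq hM.1 hab hpadj
      obtain ⟨Y, hYm, hYsupp, _⟩ := switch_avm hMav (c+1) p
        (fun i hi j' hj' h => hinj i (by omega) j' (by omega) h)
        (fun i hi => hadj i (by omega)) (fun i hi => halt i (by omega)) hp0
        (fun i hi => by simp)
      have hbY : b ∉ Y.support := by
        rw [hYsupp, hbp]
        have : 2*(c+1) = j+1 := by omega
        rw [this]
        simp
      exact ⟨Y, (avm_empty_iff Y).mp hYm, hbY⟩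
  · -- a not on the path: extend the path by the edges (d,a) and (a,b)
    push_neg at hap
    have hbp : ∀ j, j ≤ 2*k → p j ≠ b := by
      intro j hj hjb
      have hj0 : 0 < j := by
        rcases Nat.eq_zero_or_pos j with rfl | h
        · exfalso
          apply hp0
          rw [hjb]
          exact ⟨a, hab.symm⟩
        · exact h
      rcases Nat.even_or_odd j with hje | hjo
      · -- b at even position: its partner is p (j-1)
        obtain ⟨c, hc⟩ := hje
        have hpadj : M.Adj (p (j-1)) (p j) := by
          have hodd : Odd (j-1) := ⟨c-1, by omega⟩
          have := (halt (j-1) (by omega)).mpr hodd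
          have he : j - 1 + 1 = j := by omega
          rwa [he] at this
        rw [hjb] at hpadj
        have := matching_eq hM.1 hpadj.symm hab.symm
        exact hap (j-1) (by omega) this
      · obtain ⟨c, hc⟩ := hjo
        have hjlt : j < 2*k := by omega
        have hpadj : M.Adj (p j) (p (j+1)) := (halt j hjlt).mpr ⟨c, hc⟩
        rw [hjb] at hpadj
        have := matching_eq hM.1 hpadj hab.symm
        exact hap (j+1) (by omega) this
    have hdb : d ≠ b := by
      intro h
      exact hbp (2*k) (le_refl _) (by rw [hpend, h])
    have hda : ¬ M.Adj d a := by
      intro h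
      have := matching_eq hM.1 h.symm hab
      exact hdb this
    set p' : ℕ → V := fun i => if i ≤ 2*k then p i else if i = 2*k+1 then a else b with hp'
    have hp'eq : ∀ i, i ≤ 2*k → p' i = p i := by intro i hi; simp [hp', hi]
    have hp'a : p' (2*k+1) = a := by simp [hp']
    have hp'b : p' (2*k+2) = b := by
      have h1 : ¬(2*k+2 ≤ 2*k) := by omega
      have h2 : ¬(2*k+2 = 2*k+1) := by omega
      simp [hp', h1, h2]
    have hab' : a ≠ b := hab.adj_sub.ne
    obtain ⟨Y, hYm, hYsupp, _⟩ := switch_avm hMav (k+1) p'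
      (by
        intro i hi j hj h
        have h2 : 2*(k+1) = 2*k+2 := by ring
        by_cases hi' : i ≤ 2*k <;> by_cases hj' : j ≤ 2*k
        · rw [hp'eq i hi', hp'eq j hj'] at h
          exact hinj i hi' j hj' h
        · have hj'' : j = 2*k+1 ∨ j = 2*k+2 := by omega
          exfalso
          rcases hj'' with rfl | rfl
          · rw [hp'eq i hi', hp'a] at h
            exact hap i hi' h
          · rw [hp'eq i hi', hp'b] at h
            exact hbp i hi' h
        · have hi'' : i = 2*k+1 ∨ i = 2*k+2 := by omega
          exfalso
          rcases hi'' with rfl | rfl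
          · rw [hp'eq j hj', hp'a] at h
            exact hap j hj' h.symm
          · rw [hp'eq j hj', hp'b] at h
            exact hbp j hj' h.symm
        · have hi'' : i = 2*k+1 ∨ i = 2*k+2 := by omega
          have hj'' : j = 2*k+1 ∨ j = 2*k+2 := by omega
          rcases hi'' with rfl | rfl <;> rcases hj'' with rfl | rfl
          · rfl
          · rw [hp'a, hp'b] at h; exact absurd h hab'
          · rw [hp'a, hp'b] at h; exact absurd h.symm hab'
          · rfl)
      (by
        intro i hi
        by_cases hi' : i < 2*k
        · rw [hp'eq i (by omega), hp'eq (i+1) (by omega)]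
          exact hadj i hi'
        · rcases (by omega : i = 2*k ∨ i = 2*k+1) with h5 | h5
          · subst h5
            rw [hp'eq (2*k) (by omega), hp'a, hpend]
            exact had.symm
          · subst h5
            show G.Adj (p' (2*k+1)) (p' (2*k+2))
            rw [hp'a, hp'b]
            exact hab.adj_sub)
      (by
        intro i hi
        by_cases hi' : i < 2*k
        · rw [hp'eq i (by omega), hp'eq (i+1) (by omega)]
          exact halt i hi'
        · rcases (by omega : i = 2*k ∨ i = 2*k+1) with h5 | h5
          · subst h5
            rw [hp'eq (2*k) (by omega), hp'a, hpend]
            apply iff_of_false hda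
            rintro ⟨c, hc⟩
            omega
          · subst h5
            show M.Adj (p' (2*k+1)) (p' (2*k+2)) ↔ Odd (2*k+1)
            rw [hp'a, hp'b]
            exact iff_of_true hab ⟨k, by omega⟩)
      (by rw [hp'eq 0 (by omega)]; exact hp0)
      (fun i hi => by simp)
    have hbY : b ∉ Y.support := by
      rw [hYsupp]
      have h2 : 2*(k+1) = 2*k+2 := by ring
      rw [h2, hp'b]
      simp
    exact ⟨Y, (avm_empty_iff Y).mp hYm, hbY⟩

lemma dset_not_aset {v : V} (hv : v ∈ Dset G) : v ∉ Aset G := fun h => h.1 hv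

lemma augment_contra {F : Set V} {X : G.Subgraph} (hX : AvM G F X) {x y : V}
    (hxy : G.Adj x y) (hx : x ∉ X.support) (hy : y ∉ X.support)
    (hxF : x ∉ F) (hyF : y ∉ F) : False := by
  obtain ⟨Z, hZm, hZsupp⟩ := addEdge hX.1 hx hy hxy
  have hb := hX.2.2 Z hZm (fun f hf => by
    rw [hZsupp]
    rintro (h | h)
    · exact hX.2.1 f hf h
    · rcases h with rfl | rfl
      · exact hxF hf
      · exact hyF hf)
  rw [hZsupp, ncard_add2 hx hy hxy.ne] at hb
  omega

/-- Gallai-type lemma: a maximum `A`-avoiding matching cannot miss two vertices in the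
same component of `G[D]`. -/
lemma lemmaG {X : G.Subgraph} (hX : AvM G (Aset G) X) {x y : ↥(Dset G)}
    (hxy : x ≠ y) (hreach : (G.induce (Dset G)).Reachable x y)
    (hxX : (x:V) ∉ X.support) (hyX : (y:V) ∉ X.support) : False := by
  classical
  obtain ⟨W⟩ := hreach
  have main : ∀ (n : ℕ) (X : G.Subgraph), AvM G (Aset G) X → ∀ (x y : ↥(Dset G)),
      ∀ (W : (G.induce (Dset G)).Walk x y), W.length ≤ n → x ≠ y →
      (x:V) ∉ X.support → (y:V) ∉ X.support → False := by
    intro n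
    induction n with
    | zero =>
      intro X hX x y W hlen hxy hxX hyX
      have : W.length = 0 := by omega
      exact hxy (SimpleGraph.Walk.eq_of_length_eq_zero this)
    | succ n ih =>
      intro X hX x y W hlen hxy hxX hyX
      cases W with
      | nil => exact hxy rfl
      | @cons _ t _ hadj W' =>
        have hadjG : G.Adj (x:V) (t:V) := by simpa using hadj
        have hlen' : W'.length ≤ n := by
          simp only [SimpleGraph.Walk.length_cons] at hlen
          omega
        by_cases htX : (t:V) ∈ X.support
        · -- t is covered : expose it by switching, keeping track of cases
          have htD : (t:V) ∈ DF G (Aset G) := by rw [ST_A]; exact t.2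
          obtain ⟨_, N', hN', htN'⟩ := htD
          obtain ⟨ℓ, w, hpos, hw0, hinj, halt, hterm⟩ := walk_exists hX.1 hN'.1 htX htN'
          have hwsupp := walk_mem_support (hw0 ▸ htX) halt
          have hAw : ∀ i ≤ ℓ, w i ∉ Aset G := fun i hi hf =>
            (hwsupp i hi).elim (fun h => hX.2.1 _ hf h) (fun h => hN'.2.1 _ hf h)
          rcases hterm with ⟨hodd, hend⟩ | ⟨heven, hend⟩
          · obtain ⟨k, hk⟩ := hodd
            have hℓ : ℓ = 2*k+1 := by omega
            subst hℓ
            exact no_augpath hN' k w hinj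
              (fun i hi => by
                rcases Nat.even_or_odd i with hp | hp
                · exact ((halt i hi).1.mpr hp).adj_sub
                · exact ((halt i hi).2.mpr hp).adj_sub)
              (fun i hi => (halt i hi).2) (hw0 ▸ htN') hend hAw
          · obtain ⟨k, hk⟩ := heven
            have hℓ : ℓ = 2*k := by omega
            subst hℓ
            set q := w (2*k) with hq
            obtain ⟨X', hX'm, hX'supp, _⟩ := switch_avm hX k (fun i => w (2*k - i))
              (fun i hi j hj h => by
                have := hinj (2*k - i) (by omega) (2*k - j) (by omega) h
                omega)
              (fun i hi => by
                show G.Adj (w (2*k - i)) (w (2*k - (i+1)))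
                have h1 : 2*k - i - 1 < 2*k := by omega
                have h2 : 2*k - i - 1 + 1 = 2*k - i := by omega
                have h3 : 2*k - (i+1) = 2*k - i - 1 := by omega
                rw [h3]
                rcases Nat.even_or_odd (2*k - i - 1) with hp | hp
                · have := ((halt _ h1).1.mpr hp).adj_sub
                  rw [h2] at this
                  exact this.symm
                · have := ((halt _ h1).2.mpr hp).adj_sub
                  rw [h2] at this
                  exact this.symm)
              (fun i hi => by
                show X.Adj (w (2*k - i)) (w (2*k - (i+1))) ↔ Odd i
                have h1 : 2*k - i - 1 < 2*k := by omega
                have h2 : 2*k - i - 1 + 1 = 2*k - i := by omega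
                have h3 : 2*k - (i+1) = 2*k - i - 1 := by omega
                have hiff := (halt _ h1).1
                rw [h2] at hiff
                rw [h3, Subgraph.adj_comm, hiff]
                constructor
                · rintro ⟨c, hc⟩
                  exact ⟨k - c - 1, by omega⟩
                · rintro ⟨c, hc⟩
                  exact ⟨k - c - 1, by omega⟩)
              (by simpa using hend)
              (fun i hi => hAw (2*k - i) (by omega))
            have hw2k0 : w (2*k - 2*k) = (t:V) := by simpa using hw0
            have hq0 : w (2*k - 0) = q := rfl
            have htX' : (t:V) ∉ X'.support := by
              rw [hX'supp, hw2k0]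
              simp
            have hty : t ≠ y := by
              intro h
              rw [h] at htX
              exact hyX htX
            by_cases hqx : q = (x:V)
            · -- x got covered, t exposed; recurse along W' with pair (t, y)
              have hyX' : (y:V) ∉ X'.support := by
                rw [hX'supp]
                rintro ⟨h1 | h1, _⟩
                · rw [hq0] at h1
                  exact hxy (Subtype.ext ((h1.trans hqx) ▸ rfl))
                · exact hyX h1
              exact ih X' hX'm t y W' hlen' hty htX' hyX'
            · -- x remains exposed and is adjacent to the newly exposed t : augment
              have hxX' : (x:V) ∉ X'.support := by
                rw [hX'supp]
                rintro ⟨h1 | h1, _⟩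
                · rw [hq0] at h1
                  exact hqx h1.symm
                · exact hxX h1
              exact augment_contra hX'm hadjG hxX' htX'
                (dset_not_aset x.2) (dset_not_aset t.2)
        · -- t is exposed
          by_cases htyE : t = y
          · subst htyE
            exact augment_contra hX hadjG hxX htX (dset_not_aset x.2) (dset_not_aset t.2)
          · exact ih X hX t y W' hlen' htyE htX hyX
  exact main W.length X hX x y W (le_refl _) hxy hxX hyX

/-- `v` is deficient for `X` : either exposed, or matched to a vertex outside `D(G)`. -/
def Deficient (G : SimpleGraph V) (X : G.Subgraph) (v : V) : Prop :=
  v ∉ X.support ∨ ∃ w, X.Adj v w ∧ w ∉ Dset G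

lemma uniqueness_aux : ∀ (n : ℕ) (F : Set V), F ⊆ Aset G → (Aset G \ F).ncard = n →
    ∀ (X : G.Subgraph), AvM G F X → ∀ (x y : ↥(Dset G)), x ≠ y →
    (G.induce (Dset G)).Reachable x y →
    Deficient G X ↑x → Deficient G X ↑y → False := by
  classical
  intro n
  induction n with
  | zero =>
    intro F hFA hn X hX x y hxy hreach hdx hdy
    have hFA' : F = Aset G := by
      have h1 : Aset G \ F = ∅ := (Set.ncard_eq_zero (Set.toFinite _)).mp hn
      have h2 : Aset G ⊆ F := by rwa [Set.diff_eq_empty] at h1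
      exact Set.Subset.antisymm hFA h2
    have hexp : ∀ (v : ↥(Dset G)), Deficient G X ↑v → (v:V) ∉ X.support := by
      intro v hd
      rcases hd with h | ⟨w, hw, hwD⟩
      · exact h
      · exfalso
        by_cases hwA : w ∈ Aset G
        · exact hX.2.1 w (hFA' ▸ hwA) ⟨_, hw.symm⟩
        · exact hwA ⟨hwD, ↑v, v.2, hw.adj_sub.symm⟩
    exact lemmaG (hFA' ▸ hX) hxy hreach (hexp x hdx) (hexp y hdy)
  | succ n ih =>
    intro F hFA hn X hX x y hxy hreach hdx hdy
    have hne : (Aset G \ F).Nonempty := by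
      rw [Set.nonempty_iff_ne_empty]
      intro h
      rw [h, Set.ncard_empty] at hn
      omega
    obtain ⟨a, haA, haF⟩ := hne
    have hDFF : DF G F = Dset G := ST F.ncard F hFA rfl
    have haX : a ∈ X.support := covered_of_not_DF haF (by rw [hDFF]; intro h; exact haA.1 h) hX
    obtain ⟨b, hb⟩ := exists_partner hX.1 haX
    obtain ⟨Y, hYm, hYsupp, hYadj⟩ := removeEdge hX.1 hb
    have hYcard : Y.support.ncard + 2 = X.support.ncard := by
      rw [hYsupp]
      exact ncard_diff2 haX ⟨_, hb.symm⟩ hb.adj_sub.ne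
    have hYA : AvM G (insert a F) Y := by
      refine ⟨hYm, ?_, ?_⟩
      · intro f hf
        rw [hYsupp]
        rcases hf with rfl | hf
        · simp
        · intro ⟨h1, _⟩
          exact hX.2.1 f hf h1
      · intro Z hZ hZF
        have := bound_insert hDFF haA haF hX hZ hZF
        omega
    have htrans : ∀ (v : ↥(Dset G)), Deficient G X ↑v → Deficient G Y ↑v := by
      intro v hd
      have hvA : (v:V) ∉ Aset G := dset_not_aset v.2
      have hva : (v:V) ≠ a := fun h => hvA (h ▸ haA)
      rcases hd with h | ⟨w, hw, hwD⟩
      · left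
        rw [hYsupp]
        intro ⟨h1, _⟩
        exact h h1
      · by_cases hwa : w = a
        · -- then v is the partner b of a; it becomes exposed in Y
          subst hwa
          have hvb : (v:V) = b := matching_eq hX.1 hw.symm hb
          left
          rw [hYsupp, hvb]
          simp
        · right
          refine ⟨w, ?_, hwD⟩
          rw [hYadj]
          refine ⟨hw, ?_, ?_⟩
          · rintro ⟨h1, _⟩
            exact hva h1
          · rintro ⟨h1, h2⟩
            exact hwa h2
    refine ih (insert a F) ?_ ?_ Y hYA x y hxy hreach (htrans x hdx) (htrans y hdy)
    · intro f hf
      rcases hf with rfl | hf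
      · exact haA
      · exact hFA hf
    · have hdiff : Aset G \ insert a F = (Aset G \ F) \ {a} := by
        ext z
        simp only [Set.mem_diff, Set.mem_insert_iff, Set.mem_singleton_iff]
        tauto
      rw [hdiff, Set.ncard_diff_singleton_of_mem ((Set.mem_diff a).mpr ⟨haA, haF⟩)]
      omega

/-- uniqueness : a maximum matching has at most one deficient vertex per component of `G[D]` -/
lemma uniqueness {M : G.Subgraph} (hM : IsMaxMatching G M) {x y : ↥(Dset G)} (hxy : x ≠ y)
    (hreach : (G.induce (Dset G)).Reachable x y)
    (hdx : Deficient G M ↑x) (hdy : Deficient G M ↑y) : False := by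
  refine uniqueness_aux (Aset G).ncard ∅ (by simp) (by simp) M
    ((avm_empty_iff M).mpr hM) x y hxy hreach hdx hdy

lemma induce_adj_of {s : Set V} {u v : V} (hu : u ∈ s) (hv : v ∈ s) (h : G.Adj u v) :
    (G.induce s).Adj ⟨u, hu⟩ ⟨v, hv⟩ := by simpa using h

lemma existence {M : G.Subgraph} (hM : IsMaxMatching G M)
    (c : (G.induce (Dset G)).ConnectedComponent) :
    ∃ d : ↥(Dset G), (G.induce (Dset G)).connectedComponentMk d = c ∧ Deficient G M ↑d := by
  classical
  obtain ⟨x₀, hx₀⟩ := c.exists_rep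
  have hMav : AvM G ∅ M := (avm_empty_iff M).mpr hM
  have hx₀D : ∃ Nn : G.Subgraph, AvM G ∅ Nn ∧ (x₀:V) ∉ Nn.support := by
    obtain ⟨Nn, hNn, hm⟩ := x₀.2
    exact ⟨Nn, (avm_empty_iff Nn).mpr hNn, hm⟩
  obtain ⟨k, p, hpend, hp0, hinj, hadj, halt, _⟩ := reach hMav (by simp) hx₀D
  -- every even-position vertex is in D
  have hevD : ∀ i, i ≤ k → p (2*i) ∈ Dset G := by
    intro i hik
    obtain ⟨Y, hYm, hYsupp, _⟩ := switch_avm hMav i p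
      (fun i' hi' j hj h => hinj i' (by omega) j (by omega) h)
      (fun i' hi' => hadj i' (by omega)) (fun i' hi' => halt i' (by omega)) hp0
      (fun i' hi' => by simp)
    have : p (2*i) ∉ Y.support := by rw [hYsupp]; simp
    exact ⟨Y, (avm_empty_iff Y).mp hYm, this⟩
  have desc : ∀ i, i ≤ k → ∀ (h : p (2*i) ∈ Dset G),
      (G.induce (Dset G)).connectedComponentMk ⟨p (2*i), h⟩ = c →
      ∃ d : ↥(Dset G), (G.induce (Dset G)).connectedComponentMk d = c ∧ Deficient G M ↑d := by
    intro i
    induction i with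
    | zero =>
      intro _ h hc
      exact ⟨⟨p 0, h⟩, hc, Or.inl hp0⟩
    | succ i ihh =>
      intro hik h hc
      have h' : p (2*i+2) ∈ Dset G := h
      have hc' : (G.induce (Dset G)).connectedComponentMk ⟨p (2*i+2), h'⟩ = c := hc
      by_cases hdef : Deficient G M (p (2*i+2))
      · exact ⟨⟨p (2*i+2), h'⟩, hc', hdef⟩
      · rw [Deficient] at hdef
        push_neg at hdef
        obtain ⟨hcov, hpart⟩ := hdef
        have hedge : M.Adj (p (2*i+1)) (p (2*i+2)) := by
          have := (halt (2*i+1) (by omega)).mpr ⟨i, by omega⟩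
          exact this
        have hp1D : p (2*i+1) ∈ Dset G := hpart _ hedge.symm
        have hp0D : p (2*i) ∈ Dset G := hevD i (by omega)
        have hadj01 : G.Adj (p (2*i)) (p (2*i+1)) := hadj (2*i) (by omega)
        have hadj12 : G.Adj (p (2*i+1)) (p (2*i+2)) := hedge.adj_sub
        have hmk1 : (G.induce (Dset G)).connectedComponentMk ⟨p (2*i), hp0D⟩ =
            (G.induce (Dset G)).connectedComponentMk ⟨p (2*i+1), hp1D⟩ :=
          ConnectedComponent.sound (induce_adj_of hp0D hp1D hadj01).reachable
        have hmk2 : (G.induce (Dset G)).connectedComponentMk ⟨p (2*i+1), hp1D⟩ =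
            (G.induce (Dset G)).connectedComponentMk ⟨p (2*i+2), h'⟩ :=
          ConnectedComponent.sound (induce_adj_of hp1D h' hadj12).reachable
        exact ihh (by omega) hp0D (by rw [hmk1, hmk2]; exact hc')
  have hx₀eq : (⟨p (2*k), hpend ▸ x₀.2⟩ : ↥(Dset G)) = x₀ := Subtype.ext hpend
  exact desc k (le_refl _) (hpend ▸ x₀.2) (by rw [hx₀eq]; exact hx₀)

lemma part3 {M : G.Subgraph} (hM : IsMaxMatching G M) {a : V} (ha : a ∈ Aset G) :
    (∃ d ∈ Dset G, M.Adj a d) ∧ (∀ u, M.Adj a u → u ∈ Dset G) := by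
  have haM : a ∈ M.support := not_dset_covered ha.1 hM
  obtain ⟨b, hb⟩ := exists_partner hM.1 haM
  exact ⟨⟨b, partner_in_D hM ha hb, hb⟩, fun u hu => partner_in_D hM ha hu⟩

end EG

open SimpleGraph in
/-- Edmonds–Gallai: every maximum matching `M` contains a near-perfect matching of
each component of `G[D(G)]` (exactly one vertex of the component is not matched
within it), a perfect matching of each component of `G[C(G)]` (every vertex is
matched within its component), and matches every vertex of `A(G)` to a vertex of
`D(G)`, with distinct `A(G)`-vertices matched into distinct components of `G[D(G)]`. -/
theorem stmt5 {V : Type*} [Fintype V] (G : SimpleGraph V)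
    (M : G.Subgraph) (hM : IsMaxMatching G M) :
    (∀ c : (G.induce (Dset G)).ConnectedComponent,
      ({w : Dset G | (G.induce (Dset G)).connectedComponentMk w = c ∧
        ¬ ∃ u : Dset G, (G.induce (Dset G)).connectedComponentMk u = c ∧
          M.Adj ↑w ↑u}).ncard = 1) ∧
    (∀ w : Cset G, ∃ u : Cset G,
      (G.induce (Cset G)).connectedComponentMk u
        = (G.induce (Cset G)).connectedComponentMk w ∧ M.Adj ↑w ↑u) ∧
    (∀ a ∈ Aset G, (∃ d ∈ Dset G, M.Adj a d) ∧ (∀ u : V, M.Adj a u → u ∈ Dset G)) ∧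
    (∀ a a' : V, a ∈ Aset G → a' ∈ Aset G → a ≠ a' →
      ∀ d d' : Dset G, M.Adj a ↑d → M.Adj a' ↑d' →
        (G.induce (Dset G)).connectedComponentMk d ≠
          (G.induce (Dset G)).connectedComponentMk d') := by
  classical
  refine ⟨?_, ?_, ?_, ?_⟩
  · -- exactly one deficient vertex per component of G[D]
    intro c
    obtain ⟨d, hdc, hdd⟩ := EG.existence hM c
    rw [Set.ncard_eq_one]
    refine ⟨d, ?_⟩
    ext w
    simp only [Set.mem_setOf_eq, Set.mem_singleton_iff]
    constructor
    · rintro ⟨hwc, hwno⟩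
      have hwdef : EG.Deficient G M ↑w := by
        by_cases hws : (w:V) ∈ M.support
        · obtain ⟨z, hz⟩ := EG.exists_partner hM.1 hws
          by_cases hzD : z ∈ Dset G
          · exfalso
            apply hwno
            refine ⟨⟨z, hzD⟩, ?_, hz⟩
            have hmk : (G.induce (Dset G)).connectedComponentMk ⟨z, hzD⟩ =
                (G.induce (Dset G)).connectedComponentMk w :=
              SimpleGraph.ConnectedComponent.sound
                (EG.induce_adj_of hzD w.2 hz.adj_sub.symm).reachable
            rw [hmk]
            exact hwc
          · exact Or.inr ⟨z, hz, hzD⟩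
        · exact Or.inl hws
      by_contra hwd
      exact EG.uniqueness hM hwd
        (SimpleGraph.ConnectedComponent.exact (hwc.trans hdc.symm)) hwdef hdd
    · rintro rfl
      refine ⟨hdc, ?_⟩
      rintro ⟨u, huc, huadj⟩
      rcases hdd with h | ⟨z, hz, hzD⟩
      · exact h ⟨_, huadj⟩
      · have huz : (u:V) = z := EG.matching_eq hM.1 huadj hz
        exact hzD (huz ▸ u.2)
  · -- C is perfectly matched within its components
    intro w
    have hwD : (w:V) ∉ Dset G := w.2.1
    have hwA : (w:V) ∉ Aset G := w.2.2
    have hwM : (w:V) ∈ M.support := EG.not_dset_covered hwD hM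
    obtain ⟨u, hu⟩ := EG.exists_partner hM.1 hwM
    have huD : u ∉ Dset G := fun h => hwA ⟨hwD, u, h, hu.adj_sub⟩
    have huA : u ∉ Aset G := fun h => hwD ((EG.part3 hM h).2 _ hu.symm)
    have huC : u ∈ Cset G := ⟨huD, huA⟩
    refine ⟨⟨u, huC⟩, ?_, hu⟩
    exact SimpleGraph.ConnectedComponent.sound
      (EG.induce_adj_of huC w.2 hu.adj_sub.symm).reachable
  · intro a ha
    exact EG.part3 hM ha
  · intro a a' haA ha'A hne d d' hd hd' hcomp
    have hdd' : d ≠ d' := by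
      intro h
      apply hne
      have h1 : M.Adj ↑d a := hd.symm
      have h2 : M.Adj ↑d a' := by rw [h]; exact hd'.symm
      exact EG.matching_eq hM.1 h1 h2
    exact EG.uniqueness hM hdd' (SimpleGraph.ConnectedComponent.exact hcomp)
      (Or.inr ⟨a, hd.symm, haA.1⟩) (Or.inr ⟨a', hd'.symm, ha'A.1⟩)
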